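/- Let 0 < ε < 1/2 and 0 < M < 4, and set Δ := 10√ε / (4 − M). There exists S₀ < ∞, depending only on ε and M, with the following property: for every T > 0, every λ : [0,T'] → ℝ (T' ≥ T) with ‖λ‖_{1/2} ≤ 4 + 2ε, and every real x ≠ λ(0) captured by λ at time T (i.e. the real solution g_t(x) of ∂_t g_t(x) = 2/(g_t(x) − λ(t)), g_0(x) = x, exists on [0,T) and g_t(x) − λ(t) → 0 as t → T⁻), and for every s ≥ S₀, the time interval [(1 − e^{−s})T, (1 − e^{−(s+Δ)})T] contains a time t with |λ(T) − λ(t)| ≥ M√(T − t). Moreover, if x > λ(0), then this t can be chosen with λ(T) − λ(t) ≥ M√(T − t). -/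

import Mathlib

open Set Filter Topology

noncomputable section

/-- `HalfLipOn lam S C` : `lam` is Lip(1/2) on `S` with constant `C`. -/
def HalfLipOn (lam : ℝ → ℝ) (S : Set ℝ) (C : ℝ) : Prop :=
  ∀ s ∈ S, ∀ t ∈ S, |lam t - lam s| ≤ C * Real.sqrt |t - s|

/-- `RealLoewnerSolOn lam x g s` means that the real-valued function `g` solves the chordal
Loewner equation `∂ₜ g t = 2 / (g t - lam t)`, `g 0 = x`, on the time interval `[0, s)`
(one-sided derivative at `0`). -/
def RealLoewnerSolOn (lam : ℝ → ℝ) (x : ℝ) (g : ℝ → ℝ) (s : ℝ) : Prop :=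
  g 0 = x ∧ ∀ t ∈ Set.Ico (0 : ℝ) s,
    g t ≠ lam t ∧ HasDerivWithinAt g (2 / (g t - lam t)) (Set.Ici 0) t

namespace Tail2

lemma halfLip_continuousOn {lam : ℝ → ℝ} {T' C : ℝ} (hC : 0 < C)
    (h : ∀ s ∈ Set.Icc (0:ℝ) T', ∀ t ∈ Set.Icc (0:ℝ) T', |lam t - lam s| ≤ C * Real.sqrt |t - s|) :
    ContinuousOn lam (Set.Icc 0 T') := by
  intro s₀ hs₀
  rw [Metric.continuousWithinAt_iff]
  intro δ hδ
  refine ⟨(δ / (2 * C)) ^ 2, by positivity, fun {t} ht hts => ?_⟩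
  have h1 := h s₀ hs₀ t ht
  rw [Real.dist_eq] at hts ⊢
  have h2 : Real.sqrt |t - s₀| < δ / (2 * C) := by
    have := Real.sqrt_lt_sqrt (abs_nonneg _) hts
    rwa [Real.sqrt_sq (by positivity)] at this
  have h3 : C * Real.sqrt |t - s₀| ≤ C * (δ / (2 * C)) :=
    mul_le_mul_of_nonneg_left h2.le hC.le
  have h4 : C * (δ / (2 * C)) = δ / 2 := by field_simp
  calc |lam t - lam s₀| ≤ C * Real.sqrt |t - s₀| := h1
    _ ≤ δ / 2 := by rw [← h4]; exact h3
    _ < δ := by linarith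

/-- Invariance: if `f A ≤ K` and the derivative is negative whenever `f = K`,
then `f ≤ K` on `[A,B]`. -/
lemma invariance {f fd : ℝ → ℝ} {A B K : ℝ}
    (hderiv : ∀ t ∈ Set.Icc A B, HasDerivAt f (fd t) t)
    (hA : f A ≤ K)
    (hAB : A ≤ B)
    (hneg : ∀ t ∈ Set.Ico A B, f t = K → fd t < 0) :
    ∀ t ∈ Set.Icc A B, f t ≤ K := by
  intro t₁ ht₁
  by_contra hgt
  push_neg at hgt
  have hA1 : A ≤ t₁ := ht₁.1
  have hsub : Set.Icc A t₁ ⊆ Set.Icc A B := Set.Icc_subset_Icc le_rfl ht₁.2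
  have hcont : ContinuousOn f (Set.Icc A t₁) := fun t ht =>
    (hderiv t (hsub ht)).continuousAt.continuousWithinAt
  have hScl : IsClosed (Set.Icc A t₁ ∩ f ⁻¹' (Set.Iic K)) :=
    hcont.preimage_isClosed_of_isClosed isClosed_Icc isClosed_Iic
  set S := Set.Icc A t₁ ∩ f ⁻¹' (Set.Iic K) with hS
  have hSne : S.Nonempty := ⟨A, ⟨le_rfl, hA1⟩, hA⟩
  have hSbdd : BddAbove S := (bddAbove_Icc (a := A) (b := t₁)).mono (Set.inter_subset_left)
  set t₂ := sSup S with ht₂def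
  have ht₂S : t₂ ∈ S := hScl.csSup_mem hSne hSbdd
  have ht₂I : t₂ ∈ Set.Icc A t₁ := ht₂S.1
  have ht₂K : f t₂ ≤ K := ht₂S.2
  have ht₂lt : t₂ < t₁ := ht₂I.2.lt_of_ne (fun h => absurd hgt (not_lt.2 (h ▸ ht₂K)))
  have hup : ∀ t ∈ Set.Ioc t₂ t₁, K < f t := by
    intro t ht
    by_contra hle
    push_neg at hle
    have : t ∈ S := ⟨⟨le_trans ht₂I.1 ht.1.le, ht.2⟩, hle⟩
    exact absurd (le_csSup hSbdd this) (not_le.2 ht.1)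
  -- f t₂ = K
  have hKle : K ≤ f t₂ := by
    have htt : Tendsto f (nhdsWithin t₂ (Set.Ioi t₂)) (nhds (f t₂)) :=
      ((hderiv t₂ (hsub ht₂I)).continuousAt.continuousWithinAt)
    refine ge_of_tendsto htt ?_
    filter_upwards [Ioo_mem_nhdsGT_of_mem ⟨le_rfl, ht₂lt⟩] with t ht
    exact (hup t ⟨ht.1, ht.2.le⟩).le
  have hfK : f t₂ = K := le_antisymm ht₂K hKle
  have ht₂B : t₂ ∈ Set.Ico A B := ⟨ht₂I.1, lt_of_lt_of_le ht₂lt ht₁.2⟩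
  have hdneg : fd t₂ < 0 := hneg t₂ ht₂B hfK
  -- but the right slope is nonneg
  have hslope : Tendsto (slope f t₂) (nhdsWithin t₂ (Set.Ioi t₂ \ {t₂})) (nhds (fd t₂)) :=
    hasDerivWithinAt_iff_tendsto_slope.1 ((hderiv t₂ (hsub ht₂I)).hasDerivWithinAt)
  have hdiff : Set.Ioi t₂ \ {t₂} = Set.Ioi t₂ := by
    ext y; simp (config := {contextual := true}) [Set.mem_diff, ne_of_gt]
  rw [hdiff] at hslope
  have h0 : 0 ≤ fd t₂ := by
    refine ge_of_tendsto hslope ?_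
    filter_upwards [Ioo_mem_nhdsGT_of_mem ⟨le_rfl, ht₂lt⟩] with t ht
    have h1 : K < f t := hup t ⟨ht.1, ht.2.le⟩
    have h2 : 0 < t - t₂ := sub_pos.2 ht.1
    rw [slope_def_field]
    have h3 : 0 ≤ f t - f t₂ := by rw [hfK]; linarith
    exact div_nonneg h3 h2.le
  linarith

/-- Logarithmic decay: if `fd t ≤ -ρ/(T-t)` on `[A,B]` with `B < T`,
then `f B ≤ f A - ρ (log(T-A) - log(T-B))`. -/
lemma logDecay {f fd : ℝ → ℝ} {A B T ρ : ℝ} (hAB : A ≤ B) (hBT : B < T)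
    (hderiv : ∀ t ∈ Set.Icc A B, HasDerivAt f (fd t) t)
    (hle : ∀ t ∈ Set.Icc A B, fd t ≤ -ρ / (T - t)) :
    f B ≤ f A - ρ * (Real.log (T - A) - Real.log (T - B)) := by
  have hlt : ∀ t ∈ Set.Icc A B, t < T := fun t ht => lt_of_le_of_lt ht.2 hBT
  have hF : ∀ t ∈ Set.Icc A B,
      HasDerivAt (fun t => f t - ρ * Real.log (T - t)) (fd t + ρ / (T - t)) t := by
    intro t ht
    have hTt : (0:ℝ) < T - t := sub_pos.2 (hlt t ht)
    have h1 : HasDerivAt (fun τ : ℝ => T - τ) (-1) t := (hasDerivAt_id t).const_sub T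
    have h2 : HasDerivAt (fun τ : ℝ => Real.log (T - τ)) ((T - t)⁻¹ * (-1)) t :=
      (Real.hasDerivAt_log hTt.ne').comp t h1
    have h3 : HasDerivAt (fun τ : ℝ => ρ * Real.log (T - τ)) (ρ * ((T - t)⁻¹ * (-1))) t :=
      h2.const_mul ρ
    have h4 := (hderiv t ht).sub h3
    refine h4.congr_deriv ?_
    field_simp
    ring
  have hanti : AntitoneOn (fun t => f t - ρ * Real.log (T - t)) (Set.Icc A B) := by
    apply antitoneOn_of_deriv_nonpos (convex_Icc A B)
    · exact fun t ht => (hF t ht).continuousAt.continuousWithinAt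
    · intro t ht
      rw [interior_Icc] at ht
      exact (hF t (Set.Ioo_subset_Icc_self ht)).differentiableAt.differentiableWithinAt
    · intro t ht
      rw [interior_Icc] at ht
      have ht' : t ∈ Set.Icc A B := Set.Ioo_subset_Icc_self ht
      rw [(hF t ht').deriv]
      have hTt : (0:ℝ) < T - t := sub_pos.2 (hlt t ht')
      have h6 := hle t ht'
      rw [neg_div] at h6
      linarith
  have := hanti ⟨le_rfl, hAB⟩ ⟨hAB, le_rfl⟩ hAB
  simp only [] at this
  linarith

lemma arctan_sub_le {x y : ℝ} (h : y ≤ x) : Real.arctan x - Real.arctan y ≤ x - y := by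
  have hmono : Monotone (fun t : ℝ => t - Real.arctan t) := by
    apply monotone_of_deriv_nonneg
    · exact differentiable_id.sub Real.differentiable_arctan
    · intro t
      have hd : HasDerivAt (fun t : ℝ => t - Real.arctan t) (1 - 1/(1 + t^2)) t :=
        (hasDerivAt_id t).sub (Real.hasDerivAt_arctan t)
      rw [hd.deriv]
      have h1 : 1 / (1 + t ^ 2) ≤ 1 := by
        rw [div_le_one (by positivity)]; nlinarith [sq_nonneg t]
      linarith
  have := hmono h
  simp only [] at this
  linarith

/-- Derivative of the explicit Lyapunov antiderivative `Ψ`. -/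
lemma psi_deriv {M κ : ℝ} (hκ : 0 < κ) (hκ2 : κ^2 = 4 - M^2/4) (x : ℝ) :
    HasDerivAt (fun x => -Real.log (x^2 - M*x + 4) + (M/κ) * Real.arctan ((x - M/2)/κ))
      (2*(M - x)/(x^2 - M*x + 4)) x := by
  have hD : x^2 - M*x + 4 = (x - M/2)^2 + κ^2 := by rw [hκ2]; ring
  have hDpos : 0 < x^2 - M*x + 4 := by rw [hD]; positivity
  have h1 : HasDerivAt (fun x : ℝ => x^2 - M*x + 4) (2*x - M) x := by
    have := (((hasDerivAt_pow 2 x).sub ((hasDerivAt_id x).const_mul M)).add_const 4)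
    refine this.congr_deriv ?_
    norm_num
  have h2 : HasDerivAt (fun x : ℝ => Real.log (x^2 - M*x + 4))
      ((x^2 - M*x + 4)⁻¹ * (2*x - M)) x := by
    have := (Real.hasDerivAt_log hDpos.ne').comp x h1; exact this
  have h3 : HasDerivAt (fun x : ℝ => (x - M/2)/κ) (1/κ) x := by
    simpa [one_div] using ((hasDerivAt_id x).sub_const (M/2)).div_const κ
  have h4 : HasDerivAt (fun x : ℝ => Real.arctan ((x - M/2)/κ))
      (1/(1 + ((x - M/2)/κ)^2) * (1/κ)) x :=
    by have := (Real.hasDerivAt_arctan ((x - M/2)/κ)).comp x h3; exact this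
  have h5 := (h2.neg).add (h4.const_mul (M/κ))
  refine h5.congr_deriv ?_
  have hden : 1 + ((x - M/2)/κ)^2 = (x^2 - M*x + 4)/κ^2 := by
    rw [hD]; field_simp; ring
  rw [hden]
  field_simp
  ring


lemma deriv_bound_aux {X ρ vv uu Tt : ℝ} (hTt : 0 < Tt) (hu0 : 0 < uu) (huX : uu ≤ X - vv)
    (hkey : (vv/2 + ρ) * (X - vv) ≤ 2) :
    (vv/2 - 2/uu)/Tt ≤ -ρ/Tt := by
  have hXv : 0 < X - vv := lt_of_lt_of_le hu0 huX
  have h1 : 2/(X - vv) ≤ 2/uu := div_le_div_of_nonneg_left (by norm_num) hu0 huX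
  have h2 : vv/2 + ρ ≤ 2/(X-vv) := (le_div_iff₀ hXv).2 hkey
  have h3 : vv/2 - 2/uu ≤ -ρ := by linarith
  exact (div_le_div_iff_of_pos_right hTt).2 h3

lemma deriv_neg_aux {X vv uu Tt : ℝ} (hTt : 0 < Tt) (hu0 : 0 < uu) (huX : uu ≤ X - vv)
    (hkey : vv * (X - vv) < 4) : (vv/2 - 2/uu)/Tt < 0 := by
  have hXv : 0 < X - vv := lt_of_lt_of_le hu0 huX
  have h1 : 2/(X - vv) ≤ 2/uu := div_le_div_of_nonneg_left (by norm_num) hu0 huX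
  have h2 : vv/2 < 2/(X-vv) := by rw [lt_div_iff₀ hXv]; nlinarith
  have h3 : vv/2 - 2/uu < 0 := by linarith
  exact div_neg_of_neg_of_pos h3 hTt

/-- derivative of `τ ↦ (L - g τ)/√(T - τ)`. -/
lemma deriv_vfun {g : ℝ → ℝ} {L T t gd : ℝ} (hTt : 0 < T - t) (hd : HasDerivAt g gd t) :
    HasDerivAt (fun τ => (L - g τ)/Real.sqrt (T - τ))
      (((L - g t)/Real.sqrt (T - t)/2 - gd * Real.sqrt (T - t)) / (T - t)) t := by
  have h2 : HasDerivAt (fun τ => L - g τ) (-gd) t := hd.const_sub L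
  have h3 : HasDerivAt (fun τ : ℝ => T - τ) (-1) t := (hasDerivAt_id t).const_sub T
  have h4 : HasDerivAt (fun τ => Real.sqrt (T - τ)) (1/(2*Real.sqrt (T - t)) * (-1)) t :=
    (Real.hasDerivAt_sqrt hTt.ne').comp t h3
  have hS0' : 0 < Real.sqrt (T - t) := Real.sqrt_pos.2 hTt
  have hS0 : Real.sqrt (T - t) ≠ 0 := hS0'.ne'
  have h5 := h2.div h4 hS0
  refine h5.congr_deriv ?_
  set S := Real.sqrt (T - t) with hSdef
  have hSS : S^2 = T - t := Real.sq_sqrt hTt.le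
  rw [← hSS]
  field_simp
  ring


lemma quad_lt {c rm rp y : ℝ} (hprod : rm*rp = 4) (hsum : rm + rp = c)
    (hy : (0:ℝ) < (rm - y)*(rp - y)) : y*(c - y) < 4 := by
  have e0 : (rm - y)*(rp - y) = 4 - c*y + y^2 := by linear_combination hprod - y*hsum
  nlinarith [e0, hy]

lemma keyCC {c rm rp K vv ρ : ℝ} (hprod : rm*rp = 4) (hsum : rm + rp = c) (hc : 0 < c)
    (hv0 : 0 < vv) (hvK : vv ≤ K) (hKrm : K < rm) (hrmrp : rm < rp)
    (hρ : ρ = (rm - K)*(rp - K)/(2*c)) : (vv/2 + ρ)*(c - vv) ≤ 2 := by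
  have e0 : (rm - vv)*(rp - vv) = 4 - c*vv + vv^2 := by linear_combination hprod - vv*hsum
  have e3 : (rm - K)*(rp - K) ≤ (rm - vv)*(rp - vv) :=
    mul_le_mul (by linarith) (by linarith) (by linarith) (by linarith)
  have hρ0 : 0 < ρ := by
    rw [hρ]
    exact div_pos (mul_pos (by linarith) (by linarith)) (by linarith)
  have e4 : ρ*(c - vv) ≤ ρ*c := mul_le_mul_of_nonneg_left (by linarith) hρ0.le
  have e5 : ρ*c = (rm-K)*(rp-K)/2 := by rw [hρ]; field_simp
  nlinarith [e0, e3, e4, e5]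

lemma keyCB {c rm rp q η vv ρ : ℝ} (hprod : rm*rp = 4) (hsum : rm + rp = c) (hc : 0 < c)
    (hq0 : 0 < q) (hη0 : 0 < η)
    (hv1 : rp + η < vv) (hv2 : vv < c)
    (hρ : ρ = η*(2*q+η)/(2*c)) (hrmrp : rm = rp - 2*q) : (vv/2 + ρ)*(c - vv) ≤ 2 := by
  have e0 : (rm - vv)*(rp - vv) = 4 - c*vv + vv^2 := by linear_combination hprod - vv*hsum
  have e3 : (2*q+η)*η ≤ (vv - rm)*(vv - rp) :=
    mul_le_mul (by linarith) (by linarith) hη0.le (by linarith)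
  have hρ0 : 0 < ρ := by
    rw [hρ]
    exact div_pos (by nlinarith) (by linarith)
  have e4 : ρ*(c - vv) ≤ ρ*c := mul_le_mul_of_nonneg_left (by linarith) hρ0.le
  have e5 : ρ*c = η*(2*q+η)/2 := by rw [hρ]; field_simp
  nlinarith [e0, e3, e4, e5]


set_option maxHeartbeats 1000000 in
lemma contraA {sE q η M κ : ℝ} (hsE0 : 0 < sE) (hq0 : 0 < q) (hq_up : q ≤ 17/8*sE)
    (hη : η = sE/8) (hM0 : 0 < M) (hM4 : M < 4)
    (hκ2 : κ^2 = 4 - M^2/4)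
    (h : 10*sE/(4 - M) ≤ M*(2*q+η)/κ^2) : False := by
  have hη0 : 0 < η := by rw [hη]; linarith
  have hκpos : 0 < κ^2 := by nlinarith
  rw [div_le_div_iff₀ (by linarith) hκpos] at h
  have h1 : M*(2*q+η)*(4-M) ≤ 2*(2*q+η)*κ^2 := by
    nlinarith [mul_nonneg (by linarith : (0:ℝ) ≤ 2*q+η) (sq_nonneg (M-4))]
  have h2 : 10*sE*κ^2 ≤ 2*(2*q+η)*κ^2 := le_trans h h1
  have h3 : 10*sE ≤ 2*(2*q+η) := (mul_le_mul_iff_of_pos_right hκpos).1 h2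
  linarith

set_option maxHeartbeats 1000000 in
lemma contraB {sE ε q η M κ : ℝ} (hsE0 : 0 < sE) (hsE2 : sE^2 = ε) (hsElt : sE^2 < 1/2)
    (hq2 : q^2 = 4*ε + ε^2) (hq0 : 0 < q) (hq_up : q ≤ 17/8*sE) (hq_lo : 2*sE ≤ q)
    (hη : η = sE/8) (hM0 : 0 < M) (hM4 : M < 4) (hM2 : 2 ≤ M)
    (hκ2 : κ^2 = 4 - M^2/4)
    (h : 10*sE/(4 - M) ≤ ((q - ε)^2 + M*(2*q+η))/κ^2) : False := by
  have hη0 : 0 < η := by rw [hη]; linarith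
  have hκpos : 0 < κ^2 := by nlinarith
  rw [div_le_div_iff₀ (by linarith) hκpos] at h
  have h1 : M*(2*q+η)*(4-M) ≤ 2*(2*q+η)*κ^2 := by
    nlinarith [mul_nonneg (by linarith : (0:ℝ) ≤ 2*q+η) (sq_nonneg (M-4))]
  have h4 : (4 - M) ≤ (2/3)*κ^2 := by
    nlinarith [mul_nonneg (sub_nonneg.2 hM2) (by linarith : (0:ℝ) ≤ 4 - M)]
  have h5 : (q-ε)^2*(4-M) ≤ (2/3)*(q-ε)^2*κ^2 := by nlinarith [sq_nonneg (q-ε), h4]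
  have h2 : 10*sE*κ^2 ≤ ((2/3)*(q-ε)^2 + 2*(2*q+η))*κ^2 := by nlinarith [h, h1, h5]
  have h3 : 10*sE ≤ (2/3)*(q-ε)^2 + 2*(2*q+η) := (mul_le_mul_iff_of_pos_right hκpos).1 h2
  have hp2 : (q-ε)^2 ≤ 4*sE^2 + 2*sE^4 - 4*sE^3 := by nlinarith [hq2, hsE2, hq_lo, hsE0]
  subst hη
  nlinarith [h3, hp2, hq_up, hsElt, hsE0,
    mul_nonneg hsE0.le (sq_nonneg (8*sE - 5)),
    mul_pos (mul_pos hsE0 hsE0) (sub_pos.2 hsElt)]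


lemma Dpos {M y : ℝ} (h : M^2 < 16) : 0 < y^2 - M*y + 4 := by
  nlinarith [sq_nonneg (2*y - M)]

lemma vM_lt {M y : ℝ} (h : M^2 < 16) : y*(M - y) < 4 := by
  nlinarith [sq_nonneg (2*y - M)]

lemma Dmono {M x y : ℝ} (h1 : y ≤ x) (h2 : M ≤ x + y) : y^2 - M*y ≤ x^2 - M*x := by
  nlinarith [mul_nonneg (sub_nonneg.2 h1) (sub_nonneg.2 h2)]

lemma Dmono' {M x y : ℝ} (h1 : y ≤ x) (h2 : x + y ≤ M) : x^2 - M*x ≤ y^2 - M*y := by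
  nlinarith [mul_nonneg (sub_nonneg.2 h1) (sub_nonneg.2 h2)]


end Tail2

set_option maxHeartbeats 1000000 in
lemma main_pos (ε M : ℝ) (hε0 : 0 < ε) (hε : ε < 1 / 2) (hM0 : 0 < M) (hM : M < 4) :
    ∃ S₀ : ℝ, ∀ T : ℝ, 0 < T → ∀ T' : ℝ, T ≤ T' → ∀ lam : ℝ → ℝ,
      HalfLipOn lam (Set.Icc 0 T') (4 + 2 * ε) →
      ∀ x : ℝ, lam 0 < x → ∀ g : ℝ → ℝ, RealLoewnerSolOn lam x g T →
      Tendsto (fun t => g t - lam t) (nhdsWithin T (Set.Iio T)) (nhds 0) →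
      ∀ s : ℝ, S₀ ≤ s →
        ∃ t ∈ Set.Icc ((1 - Real.exp (-s)) * T)
            ((1 - Real.exp (-(s + 10 * Real.sqrt ε / (4 - M)))) * T),
          M * Real.sqrt (T - t) ≤ lam T - lam t := by
  -- numeric setup
  set sE := Real.sqrt ε with hsEdef
  have hsE0 : 0 < sE := Real.sqrt_pos.2 hε0
  have hsE2 : sE^2 = ε := Real.sq_sqrt hε0.le
  have hsElt : sE^2 < 1/2 := by rw [hsE2]; exact hε
  have hsE1 : sE < 1 := by nlinarith
  set c := 4 + 2*ε with hcdef
  have hc0 : (0:ℝ) < c := by rw [hcdef]; linarith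
  set q := Real.sqrt (4*ε + ε^2) with hqdef
  have hq2 : q^2 = 4*ε + ε^2 := Real.sq_sqrt (by positivity)
  have hq0 : 0 < q := Real.sqrt_pos.2 (by positivity)
  have hq_up : q ≤ 17/8 * sE := by nlinarith [hq2, hsE2, hq0, hsE0]
  have hq_lo : 2*sE ≤ q := by nlinarith [hq2, hsE2, hq0, hsE0, sq_nonneg ε]
  have hq_le1 : q ≤ 1 + ε := by nlinarith [hq2, hq0]
  set rm := 2 + ε - q with hrmdef
  set rp := 2 + ε + q with hrpdef
  have hrm1 : 1 ≤ rm := by rw [hrmdef]; linarith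
  have hrmrp : rm < rp := by rw [hrmdef, hrpdef]; linarith
  have hprod : rm * rp = 4 := by rw [hrmdef, hrpdef]; linear_combination -hq2
  have hsum : rm + rp = c := by rw [hrmdef, hrpdef, hcdef]; ring
  set η := sE/8 with hηdef
  have hη0 : 0 < η := by rw [hηdef]; linarith
  have hη1 : η < 1 := by rw [hηdef]; linarith
  set K₁ := rp + η with hK₁def
  have hK₁c : K₁ < c := by rw [hK₁def, hrpdef, hcdef]; linarith
  have hK₁rm : K₁ - rm = 2*q + η := by rw [hK₁def, hrpdef, hrmdef]; ring
  set ρ₁ := η*(2*q+η)/(2*c) with hρ₁def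
  have hρ₁ : 0 < ρ₁ := by rw [hρ₁def]; positivity
  set S₁ := Real.log 2 + (c+1)/ρ₁ with hS₁def
  clear_value sE q
  clear_value c rm rp η K₁ ρ₁ S₁
  have hlog2 : (0:ℝ) < Real.log 2 := Real.log_pos (by norm_num)
  have hS₁gt : Real.log 2 < S₁ := by
    rw [hS₁def]
    have : 0 < (c+1)/ρ₁ := div_pos (by linarith) hρ₁
    linarith
  refine ⟨max 1 S₁, ?_⟩
  intro T hT T' hTT' lam hlip x hx g hg hcap s hs
  have hs1 : 1 ≤ s := le_trans (le_max_left _ _) hs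
  have hsS₁ : S₁ ≤ s := le_trans (le_max_right _ _) hs
  -- basic facts about lam, g
  have hlip' : ∀ s₁ ∈ Set.Icc (0:ℝ) T', ∀ t₁ ∈ Set.Icc (0:ℝ) T',
      |lam t₁ - lam s₁| ≤ c * Real.sqrt |t₁ - s₁| := hlip
  have hlamc : ContinuousOn lam (Set.Icc 0 T') := Tail2.halfLip_continuousOn hc0 hlip'
  have hgne : ∀ t, 0 ≤ t → t < T → g t ≠ lam t := fun t h0 h1 => (hg.2 t ⟨h0, h1⟩).1
  have hgd : ∀ t, 0 ≤ t → t < T → HasDerivWithinAt g (2/(g t - lam t)) (Set.Ici 0) t :=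
    fun t h0 h1 => (hg.2 t ⟨h0, h1⟩).2
  have hgcont : ContinuousOn g (Set.Ico 0 T) := fun t ht =>
    ((hgd t ht.1 ht.2).continuousWithinAt).mono (fun y hy => hy.1)
  have hgdAt : ∀ t, 0 < t → t < T → HasDerivAt g (2/(g t - lam t)) t :=
    fun t h0 h1 => (hgd t h0.le h1).hasDerivAt (Ici_mem_nhds h0)
  -- positivity of g - lam
  have hpos : ∀ t, 0 ≤ t → t < T → lam t < g t := by
    intro t₁ h0 h1
    by_contra hle
    push_neg at hle
    have hne := hgne t₁ h0 h1
    have hlt : g t₁ < lam t₁ := lt_of_le_of_ne hle hne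
    have hconth : ContinuousOn (fun τ => g τ - lam τ) (Set.Icc 0 t₁) := by
      apply ContinuousOn.sub
      · exact hgcont.mono (fun y hy => ⟨hy.1, lt_of_le_of_lt hy.2 h1⟩)
      · exact hlamc.mono (fun y hy => ⟨hy.1, le_trans hy.2 (le_trans h1.le hTT')⟩)
    have h0' : 0 < g 0 - lam 0 := by rw [hg.1]; linarith
    have h1' : g t₁ - lam t₁ < 0 := by linarith
    have hmem : (0:ℝ) ∈ Set.Icc (g t₁ - lam t₁) (g 0 - lam 0) := ⟨h1'.le, h0'.le⟩
    obtain ⟨τ, hτ, hτ0⟩ := intermediate_value_Icc' h0 hconth hmem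
    exact hgne τ hτ.1 (lt_of_le_of_lt hτ.2 h1) (sub_eq_zero.1 hτ0)
  -- monotonicity
  have hmono : ∀ t₁ t₂, 0 ≤ t₁ → t₁ < t₂ → t₂ < T → g t₁ < g t₂ := by
    intro t₁ t₂ h0 h12 h2T
    have hsm : StrictMonoOn g (Set.Icc 0 t₂) := by
      apply strictMonoOn_of_deriv_pos (convex_Icc 0 t₂)
      · exact hgcont.mono (fun y hy => ⟨hy.1, lt_of_le_of_lt hy.2 h2T⟩)
      · intro τ hτ
        rw [interior_Icc] at hτ
        have hτT : τ < T := lt_trans hτ.2 h2T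
        rw [(hgdAt τ hτ.1 hτT).deriv]
        exact div_pos two_pos (sub_pos.2 (hpos τ hτ.1.le hτT))
    exact hsm ⟨h0, h12.le⟩ ⟨le_trans h0 h12.le, le_rfl⟩ h12
  -- limit of g at T
  have hglim : Tendsto g (nhdsWithin T (Set.Iio T)) (nhds (lam T)) := by
    have hl0 : Tendsto (fun t => lam t - lam T) (nhdsWithin T (Set.Iio T)) (nhds 0) := by
      have h2 : Tendsto (fun t => c * Real.sqrt (T - t)) (nhds T)
          (nhds (c * Real.sqrt (T - T))) := by
        apply Tendsto.const_mul
        exact (Real.continuous_sqrt.comp (continuous_const.sub continuous_id)).tendsto T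
      simp only [sub_self, Real.sqrt_zero, mul_zero] at h2
      have h2' := h2.mono_left (nhdsWithin_le_nhds (s := Set.Iio T))
      apply squeeze_zero_norm' ?_ h2'
      filter_upwards [Ioo_mem_nhdsLT_of_mem (show T ∈ Set.Ioc (0:ℝ) T from ⟨hT, le_rfl⟩)]
        with t ht
      have h1 := hlip' T ⟨hT.le, hTT'⟩ t ⟨ht.1.le, le_trans ht.2.le hTT'⟩
      rw [Real.norm_eq_abs]
      calc |lam t - lam T| ≤ c * Real.sqrt |t - T| := h1
        _ = c * Real.sqrt (T - t) := by rw [abs_sub_comm, abs_of_nonneg (by linarith [ht.2])]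
    have h3 := hcap.add hl0
    simp only [add_zero] at h3
    have h4 : (fun t => g t - lam t + (lam t - lam T)) = fun t => g t - lam T := by
      funext t; ring
    rw [h4] at h3
    have h5 := h3.add (tendsto_const_nhds (x := lam T))
    simp only [zero_add] at h5
    have h6 : (fun t => g t - lam T + lam T) = g := by funext t; ring
    rwa [h6] at h5
  have hgltT : ∀ t, 0 ≤ t → t < T → g t < lam T := by
    intro t h0 h1
    have h2 : t < (t+T)/2 := by linarith
    have h3 : (t+T)/2 < T := by linarith
    have h4 : g ((t+T)/2) ≤ lam T := by
      refine ge_of_tendsto hglim ?_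
      filter_upwards [Ioo_mem_nhdsLT_of_mem (show T ∈ Set.Ioc ((t+T)/2) T from ⟨h3, le_rfl⟩)]
        with τ hτ
      exact (hmono ((t+T)/2) τ (by linarith) hτ.1 hτ.2).le
    exact lt_of_lt_of_le (hmono t ((t+T)/2) h0 h2 h3) h4
  -- the ratio functions
  set v : ℝ → ℝ := fun t => (lam T - g t)/Real.sqrt (T - t) with hvdef
  set u : ℝ → ℝ := fun t => (g t - lam t)/Real.sqrt (T - t) with hudef
  set w : ℝ → ℝ := fun t => (lam T - lam t)/Real.sqrt (T - t) with hwdef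
  set vd : ℝ → ℝ := fun t => (v t/2 - 2/(u t))/(T - t) with hvddef
  clear_value v u w vd
  have hsqrt : ∀ t, t < T → 0 < Real.sqrt (T - t) := fun t ht => Real.sqrt_pos.2 (by linarith)
  have hv0 : ∀ t, 0 ≤ t → t < T → 0 < v t := by
    intro t h0 h1
    simp only [hvdef]
    exact div_pos (sub_pos.2 (hgltT t h0 h1)) (hsqrt t h1)
  have hu0 : ∀ t, 0 ≤ t → t < T → 0 < u t := by
    intro t h0 h1
    simp only [hudef]
    exact div_pos (sub_pos.2 (hpos t h0 h1)) (hsqrt t h1)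
  have huvw : ∀ t, u t + v t = w t := by
    intro t
    rw [hudef, hvdef, hwdef]
    simp only
    rw [← add_div]
    ring_nf
  have hwc : ∀ t, 0 ≤ t → t < T → w t ≤ c := by
    intro t h0 h1
    have h2 := hlip' t ⟨h0, by linarith⟩ T ⟨hT.le, hTT'⟩
    rw [hwdef]
    simp only
    rw [div_le_iff₀ (hsqrt t h1)]
    calc lam T - lam t ≤ |lam T - lam t| := le_abs_self _
      _ ≤ c * Real.sqrt |T - t| := h2
      _ = c * Real.sqrt (T - t) := by rw [abs_of_nonneg (by linarith)]

  have hvc : ∀ t, 0 ≤ t → t < T → v t < c := by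
    intro t h0 h1
    have := huvw t
    have := hwc t h0 h1
    have := hu0 t h0 h1
    linarith
  have hvderiv : ∀ t, 0 < t → t < T → HasDerivAt v (vd t) t := by
    intro t h0 h1
    have hTt : (0:ℝ) < T - t := by linarith
    have hd := Tail2.deriv_vfun (L := lam T) hTt (hgdAt t h0 h1)
    have heq : ((lam T - g t)/Real.sqrt (T - t)/2 - (2/(g t - lam t)) * Real.sqrt (T - t))
        / (T - t) = vd t := by
      rw [hvddef, hvdef, hudef]
      simp only
      have hS := hsqrt t h1
      have hgl := sub_ne_zero.2 (hgne t h0.le h1)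
      rw [div_div_eq_mul_div]
      field_simp
    rw [hvdef]
    rw [← heq]
    exact hd
  -- Claim C : v stays above rm
  have hCC : ∀ t₀, 0 < t₀ → t₀ < T → rm ≤ v t₀ := by
    intro t₀ h00 h0T
    by_contra hcon
    push_neg at hcon
    have hK0 : 0 < v t₀ := hv0 t₀ h00.le h0T
    have hrmK : 0 < rm - v t₀ := sub_pos.2 hcon
    have hrpK : 0 < rp - v t₀ := by linarith
    set ρ₀ := (rm - v t₀)*(rp - v t₀)/(2*c) with hρ₀def
    have hρ₀ : 0 < ρ₀ := div_pos (mul_pos hrmK hrpK) (by linarith)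
    set τsp := (v t₀ + 1)/ρ₀ with hτdef
    have hτsp : 0 < τsp := div_pos (by linarith) hρ₀
    set t₁ := T - (T - t₀)*Real.exp (-τsp) with ht₁def
    have hTt₀ : 0 < T - t₀ := by linarith
    have hexp1 : Real.exp (-τsp) < 1 := Real.exp_lt_one_iff.2 (by linarith)
    have hexp0 : 0 < Real.exp (-τsp) := Real.exp_pos _
    have h01 : t₀ < t₁ := by
      rw [ht₁def]; linarith [mul_pos hTt₀ (sub_pos.2 hexp1)]
    have h1T : t₁ < T := by
      rw [ht₁def]; linarith [mul_pos hTt₀ hexp0]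
    have hdIcc : ∀ t ∈ Set.Icc t₀ t₁, HasDerivAt v (vd t) t := fun t ht =>
      hvderiv t (by linarith [ht.1]) (by linarith [ht.2])
    have hinv : ∀ t ∈ Set.Icc t₀ t₁, v t ≤ v t₀ := by
      apply Tail2.invariance hdIcc le_rfl h01.le
      intro t ht hvt
      have h0t : (0:ℝ) ≤ t := by linarith [ht.1]
      have htT : t < T := by linarith [ht.2]
      have hTt : (0:ℝ) < T - t := by linarith
      rw [hvddef]
      simp only
      rw [hvt]
      apply Tail2.deriv_neg_aux (X := c) hTt (hu0 t h0t htT) ?_ ?_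
      · have h5 := hwc t h0t htT
        have h6 := huvw t
        rw [hvt] at h6
        linarith
      · exact Tail2.quad_lt hprod hsum (mul_pos hrmK hrpK)
    have hdec := Tail2.logDecay (ρ := ρ₀) h01.le h1T hdIcc ?_
    · have hlog : Real.log (T - t₀) - Real.log (T - t₁) = τsp := by
        have e1 : T - t₁ = (T - t₀)*Real.exp (-τsp) := by rw [ht₁def]; ring
        rw [e1, Real.log_mul hTt₀.ne' (Real.exp_ne_zero _), Real.log_exp]
        ring
      rw [hlog] at hdec
      have e2 : ρ₀ * τsp = v t₀ + 1 := by
        rw [hτdef]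
        field_simp
      have e3 := hv0 t₁ (by linarith) h1T
      linarith
    · intro t ht
      have h0t : (0:ℝ) ≤ t := by linarith [ht.1]
      have htT : t < T := by linarith [ht.2]
      have hTt : (0:ℝ) < T - t := by linarith
      have hvt := hinv t ht
      have hvtpos := hv0 t h0t htT
      rw [hvddef]
      simp only
      apply Tail2.deriv_bound_aux (X := c) hTt (hu0 t h0t htT) ?_ ?_
      · have h5 := hwc t h0t htT
        have h6 := huvw t
        linarith
      · exact Tail2.keyCC hprod hsum hc0 hvtpos hvt hcon hrmrp hρ₀def
  -- Claim B : eventually v ≤ K₁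
  set tS := (1 - Real.exp (-S₁))*T with htSdef
  have htS0 : 0 < Real.exp (-S₁) := Real.exp_pos _
  have htSlt : Real.exp (-S₁) < 1/2 := by
    have h1 : Real.exp (-S₁) < Real.exp (-Real.log 2) := Real.exp_lt_exp.2 (by linarith)
    have h2 : Real.exp (-Real.log 2) = 1/2 := by
      rw [Real.exp_neg, Real.exp_log (by norm_num : (0:ℝ) < 2)]
      norm_num
    linarith
  have htST2 : T/2 < tS := by
    rw [htSdef]; linarith [mul_pos (sub_pos.2 htSlt) hT]
  have htST : tS < T := by
    rw [htSdef]; linarith [mul_pos htS0 hT]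
  have hCB : ∀ t, tS ≤ t → t < T → v t ≤ K₁ := by
    have hstep1 : ∃ t', t' ∈ Set.Icc (T/2) tS ∧ v t' ≤ K₁ := by
      by_contra hcon
      push_neg at hcon
      have hdIcc : ∀ t ∈ Set.Icc (T/2) tS, HasDerivAt v (vd t) t := fun t ht =>
        hvderiv t (by linarith [ht.1]) (by linarith [ht.2])
      have hdec := Tail2.logDecay (ρ := ρ₁) htST2.le htST hdIcc ?_
      · have hlog : Real.log (T - T/2) - Real.log (T - tS) = S₁ - Real.log 2 := by
          have e1 : T - T/2 = T/2 := by ring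
          have e2 : T - tS = Real.exp (-S₁)*T := by rw [htSdef]; ring
          rw [e1, e2, Real.log_mul (Real.exp_ne_zero _) hT.ne', Real.log_exp,
            Real.log_div hT.ne' two_ne_zero]
          ring
        rw [hlog] at hdec
        have e3 : ρ₁ * (S₁ - Real.log 2) = c + 1 := by
          rw [hS₁def]
          field_simp
          ring
        rw [e3] at hdec
        have e4 : v (T/2) < c := hvc (T/2) (by linarith) (by linarith)
        have e5 := hv0 tS (by linarith) htST
        linarith
      · intro t ht
        have h0t : (0:ℝ) ≤ t := by linarith [ht.1]
        have htT : t < T := by linarith [ht.2]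
        have hTt : (0:ℝ) < T - t := by linarith
        have h1 : K₁ < v t := hcon t ht
        have h2 : v t < c := hvc t h0t htT
        rw [hvddef]
        simp only
        apply Tail2.deriv_bound_aux (X := c) hTt (hu0 t h0t htT) ?_ ?_
        · have h5 := hwc t h0t htT
          have h6 := huvw t
          linarith
        · have h1' : rp + η < v t := by rw [hK₁def] at h1; exact h1
          exact Tail2.keyCB hprod hsum hc0 hq0 hη0 h1' h2 hρ₁def
            (by rw [hrmdef, hrpdef]; ring)
    obtain ⟨t', ht'mem, ht'le⟩ := hstep1
    intro t htSt htT
    have ht't : t' ≤ t := le_trans ht'mem.2 htSt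
    have hdIcc : ∀ τ ∈ Set.Icc t' t, HasDerivAt v (vd τ) τ := fun τ hτ =>
      hvderiv τ (by linarith only [hτ.1, ht'mem.1, hT]) (by linarith only [hτ.2, htT])
    refine Tail2.invariance hdIcc ht'le ht't ?_ t ⟨ht't, le_rfl⟩
    intro τ hτ hvτ
    have h0τ : (0:ℝ) ≤ τ := by linarith only [hτ.1, ht'mem.1, hT]
    have hτT : τ < T := by linarith only [hτ.2, htT]
    have hTτ : (0:ℝ) < T - τ := by linarith only [hτT]
    rw [hvddef]
    simp only
    rw [hvτ]
    apply Tail2.deriv_neg_aux (X := c) hTτ (hu0 τ h0τ hτT) ?_ ?_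
    · have h5 := hwc τ h0τ hτT
      have h6 := huvw τ
      rw [hvτ] at h6
      linarith only [h5, h6]
    · refine Tail2.quad_lt hprod hsum ?_
      have e1 : rm - K₁ = -(2*q + η) := by rw [hK₁def, hrmdef, hrpdef]; ring
      have e2 : rp - K₁ = -η := by rw [hK₁def]; ring
      rw [e1, e2]
      have e3 : (0:ℝ) < (2*q + η) * η :=
        mul_pos (by linarith only [hq0, hη0]) hη0
      have e4 : -(2*q + η) * -η = (2*q + η) * η := by ring
      rw [e4]
      exact e3
  -- ===== final window argument =====
  set Δ := 10*sE/(4 - M) with hΔdef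
  have hM4 : (0:ℝ) < 4 - M := by linarith
  have hΔ0 : 0 < Δ := by rw [hΔdef]; exact div_pos (by linarith) hM4
  set a := (1 - Real.exp (-s))*T with hadef
  set b := (1 - Real.exp (-(s+Δ)))*T with hbdef
  clear_value Δ a b
  have hea1 : Real.exp (-s) < 1 := Real.exp_lt_one_iff.2 (by linarith)
  have hea0 : 0 < Real.exp (-s) := Real.exp_pos _
  have heb0 : 0 < Real.exp (-(s+Δ)) := Real.exp_pos _
  have heab : Real.exp (-(s+Δ)) < Real.exp (-s) := Real.exp_lt_exp.2 (by linarith)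
  have ha0 : 0 < a := by rw [hadef]; exact mul_pos (by linarith) hT
  have hab : a < b := by
    rw [hadef, hbdef]
    have := mul_lt_mul_of_pos_right
      (show (1:ℝ) - Real.exp (-s) < 1 - Real.exp (-(s+Δ)) by linarith) hT
    linarith
  have hbT : b < T := by
    rw [hbdef]
    linarith [mul_pos heb0 hT]
  have htSa : tS ≤ a := by
    rw [htSdef, hadef]
    have h1 : Real.exp (-s) ≤ Real.exp (-S₁) := Real.exp_le_exp.2 (by linarith)
    exact mul_le_mul_of_nonneg_right (by linarith) hT.le
  by_contra hcon
  push_neg at hcon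
  have hwM : ∀ t ∈ Set.Icc a b, w t < M := by
    intro t ht
    have htT : t < T := lt_of_le_of_lt ht.2 hbT
    have h1 := hcon t ht
    rw [hwdef]
    simp only
    rw [div_lt_iff₀ (hsqrt t htT)]
    linarith [h1]
  have hwin0 : ∀ t ∈ Set.Icc a b, 0 < t := fun t ht => lt_of_lt_of_le ha0 ht.1
  have hwinT : ∀ t ∈ Set.Icc a b, t < T := fun t ht => lt_of_le_of_lt ht.2 hbT
  have hvltM : ∀ t ∈ Set.Icc a b, v t < M := by
    intro t ht
    have h1 := hwM t ht
    have h2 := hu0 t (hwin0 t ht).le (hwinT t ht)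
    have h3 := huvw t
    linarith
  have hamem : a ∈ Set.Icc a b := ⟨le_rfl, hab.le⟩
  have hbmem : b ∈ Set.Icc a b := ⟨hab.le, le_rfl⟩
  rcases le_or_gt M rm with hMrm | hMrm
  · have h1 := hCC a (hwin0 a hamem) (hwinT a hamem)
    have h2 := hvltM a hamem
    linarith
  have hM216 : (0:ℝ) < 16 - M^2 := by
    have h := mul_pos hM4 (show (0:ℝ) < 4 + M by linarith)
    calc (0:ℝ) < (4-M)*(4+M) := h
      _ = 16 - M^2 := by ring
  set κ := Real.sqrt (16 - M^2)/2 with hκdef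
  have hκ0 : 0 < κ := by rw [hκdef]; exact div_pos (Real.sqrt_pos.2 hM216) two_pos
  clear_value κ
  have hκ2 : κ^2 = 4 - M^2/4 := by
    rw [hκdef, div_pow, Real.sq_sqrt hM216.le]; ring
  have hκsq : 0 < κ^2 := by positivity
  have hDpos : ∀ y : ℝ, 0 < y^2 - M*y + 4 := fun y => Tail2.Dpos (by linarith)
  set Ψ := fun y : ℝ => -Real.log (y^2 - M*y + 4) + (M/κ)*Real.arctan ((y - M/2)/κ)
    with hΨdef
  clear_value Ψ
  have hΨd : ∀ y : ℝ, HasDerivAt Ψ (2*(M - y)/(y^2 - M*y + 4)) y := by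
    intro y
    rw [hΨdef]
    exact Tail2.psi_deriv hκ0 hκ2 y
  have hfd : ∀ t ∈ Set.Icc a b, HasDerivAt (fun τ => Ψ (v τ))
      (2*(M - v t)/((v t)^2 - M*(v t) + 4) * vd t) t := fun t ht =>
    (hΨd (v t)).comp t (hvderiv t (hwin0 t ht) (hwinT t ht))
  have hfdle : ∀ t ∈ Set.Icc a b,
      2*(M - v t)/((v t)^2 - M*(v t) + 4) * vd t ≤ -(1:ℝ)/(T - t) := by
    intro t ht
    have h0t := hwin0 t ht
    have htT := hwinT t ht
    have hvt := hvltM t ht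
    have hu := hu0 t h0t.le htT
    have huM : u t < M - v t := by
      have h6 := huvw t
      have h7 := hwM t ht
      linarith
    have hTt : (0:ℝ) < T - t := by linarith
    have hMv : 0 < M - v t := by linarith
    have hD := hDpos (v t)
    have h1 : vd t ≤ (v t/2 - 2/(M - v t))/(T - t) := by
      rw [hvddef]
      simp only
      apply (div_le_div_iff_of_pos_right hTt).2
      have h9 : 2/(M - v t) ≤ 2/(u t) := div_le_div_of_nonneg_left (by norm_num) hu huM.le
      linarith
    have hψnn : 0 ≤ 2*(M - v t)/((v t)^2 - M*(v t) + 4) := by positivity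
    have h2 := mul_le_mul_of_nonneg_left h1 hψnn
    have h3 : 2*(M - v t)/((v t)^2 - M*(v t) + 4) * ((v t/2 - 2/(M - v t))/(T - t))
        = -(1:ℝ)/(T - t) := by
      rw [div_mul_div_comm, div_eq_div_iff (mul_pos hD hTt).ne' hTt.ne']
      field_simp
      ring
    linarith [h2, h3]
  have hdec := Tail2.logDecay (ρ := 1) hab.le hbT hfd hfdle
  have hlogab : Real.log (T - a) - Real.log (T - b) = Δ := by
    have e1 : T - a = Real.exp (-s)*T := by rw [hadef]; ring
    have e2 : T - b = Real.exp (-(s+Δ))*T := by rw [hbdef]; ring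
    rw [e1, e2, Real.log_mul (Real.exp_ne_zero _) hT.ne',
      Real.log_mul (Real.exp_ne_zero _) hT.ne', Real.log_exp, Real.log_exp]
    ring
  rw [hlogab] at hdec
  have hvba : v b ≤ v a := by
    have hdIcc : ∀ t ∈ Set.Icc a b, HasDerivAt v (vd t) t := fun t ht =>
      hvderiv t (hwin0 t ht) (hwinT t ht)
    refine Tail2.invariance hdIcc le_rfl hab.le ?_ b hbmem
    intro t ht hvt
    have htmem : t ∈ Set.Icc a b := ⟨ht.1, ht.2.le⟩
    have h0t : 0 < t := hwin0 t htmem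
    have htT : t < T := hwinT t htmem
    have hTt : (0:ℝ) < T - t := by linarith
    rw [hvddef]
    simp only
    rw [hvt]
    apply Tail2.deriv_neg_aux (X := M) hTt (hu0 t h0t.le htT) ?_ ?_
    · have h6 := huvw t
      have h7 := hwM t htmem
      rw [hvt] at h6
      linarith
    · exact Tail2.vM_lt (by linarith)
  have hvarm : rm ≤ v a := hCC a (hwin0 a hamem) (hwinT a hamem)
  have hvbrm : rm ≤ v b := hCC b (hwin0 b hbmem) (hwinT b hbmem)
  have hvaK : v a ≤ K₁ := hCB a htSa (hwinT a hamem)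
  have hvaM : v a < M := hvltM a hamem
  have hvbM : v b < M := hvltM b hbmem
  set va := v a with hvadef
  set vb := v b with hvbdef
  clear_value va vb
  have hDa := hDpos va
  have hDb := hDpos vb
  have hDrm := hDpos rm
  have hatan : Real.arctan ((va - M/2)/κ) - Real.arctan ((vb - M/2)/κ) ≤ (va - vb)/κ := by
    have h1 : (vb - M/2)/κ ≤ (va - M/2)/κ := (div_le_div_iff_of_pos_right hκ0).2 (by linarith)
    have h2 := Tail2.arctan_sub_le h1
    have h3 : (va - M/2)/κ - (vb - M/2)/κ = (va - vb)/κ := by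
      rw [div_sub_div_same]
      ring_nf
    linarith
  have hMκnn : 0 ≤ M/κ := (div_pos hM0 hκ0).le
  have hatan2 : (M/κ)*(Real.arctan ((va - M/2)/κ) - Real.arctan ((vb - M/2)/κ))
      ≤ M*(va - vb)/κ^2 := by
    have h5 := mul_le_mul_of_nonneg_left hatan hMκnn
    have h6 : (M/κ)*((va - vb)/κ) = M*(va - vb)/κ^2 := by
      rw [div_mul_div_comm]
      ring
    linarith [h5, h6]
  rw [hΨdef] at hdec
  simp only at hdec
  have hdec2 : Δ ≤ (Real.log (vb^2 - M*vb + 4) - Real.log (va^2 - M*va + 4))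
      + M*(va - vb)/κ^2 := by linarith [hdec, hatan2]
  have hvavb : va - vb ≤ 2*q + η := by linarith [hK₁rm]
  have h4 : M*(va - vb)/κ^2 ≤ M*(2*q+η)/κ^2 :=
    (div_le_div_iff_of_pos_right hκsq).2 (mul_le_mul_of_nonneg_left hvavb hM0.le)
  rcases le_or_gt M (va + vb) with hsumM | hsumM
  · -- case A : Db ≤ Da
    have hDbDa : vb^2 - M*vb + 4 ≤ va^2 - M*va + 4 := by
      have := Tail2.Dmono (M := M) hvba hsumM
      linarith
    have hlogle : Real.log (vb^2 - M*vb + 4) ≤ Real.log (va^2 - M*va + 4) :=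
      Real.log_le_log hDb hDbDa
    have hstep : 10*sE/(4 - M) ≤ M*(2*q+η)/κ^2 := by
      rw [← hΔdef]
      linarith [hdec2, hlogle, h4]
    exact Tail2.contraA hsE0 hq0 hq_up hηdef hM0 hM hκ2 hstep
  · -- case B
    have hM2 : 2 ≤ M := by linarith [hrm1, hvarm, hvbrm]
    have hDbDr : vb^2 - M*vb + 4 ≤ rm^2 - M*rm + 4 := by
      have := Tail2.Dmono' (M := M) hvbrm (by linarith : vb + rm ≤ M)
      linarith
    have hlog1 : Real.log (vb^2 - M*vb + 4) ≤ Real.log (rm^2 - M*rm + 4) :=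
      Real.log_le_log hDb hDbDr
    have hDaκ : κ^2 ≤ va^2 - M*va + 4 := by linarith [sq_nonneg (va - M/2), hκ2]
    have hlog2 : Real.log (rm^2 - M*rm + 4) - Real.log (va^2 - M*va + 4)
        ≤ (rm - M/2)^2/κ^2 := by
      rw [← Real.log_div hDrm.ne' hDa.ne']
      have e9 : rm^2 - M*rm + 4 = (rm - M/2)^2 + κ^2 := by linear_combination -hκ2
      have h8 : (rm^2 - M*rm + 4)/(va^2 - M*va + 4) ≤ ((rm - M/2)^2 + κ^2)/κ^2 := by
        rw [e9]
        exact div_le_div_of_nonneg_left (by positivity) hκsq hDaκ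
      have h9 := Real.log_le_sub_one_of_pos (div_pos hDrm hDa)
      have h10 : ((rm - M/2)^2 + κ^2)/κ^2 = (rm - M/2)^2/κ^2 + 1 := by
        field_simp
      linarith [h8, h9, h10]
    have hrmM2 : (rm - M/2)^2 ≤ (q - ε)^2 := by
      have h11 : 0 ≤ M/2 - rm := by linarith
      have h12 : M/2 - rm ≤ q - ε := by rw [hrmdef]; linarith
      have h13 : (rm - M/2)^2 = (M/2 - rm)^2 := by ring
      rw [h13]
      exact pow_le_pow_left₀ h11 h12 2
    have h14 : (rm - M/2)^2/κ^2 ≤ (q - ε)^2/κ^2 := (div_le_div_iff_of_pos_right hκsq).2 hrmM2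
    have hstep : 10*sE/(4 - M) ≤ ((q - ε)^2 + M*(2*q+η))/κ^2 := by
      rw [← hΔdef]
      have h13 : (q - ε)^2/κ^2 + M*(2*q+η)/κ^2 = ((q - ε)^2 + M*(2*q+η))/κ^2 := by
        rw [← add_div]
      linarith [hdec2, hlog1, hlog2, h4, h13, h14]
    exact Tail2.contraB hsE0 hsE2 hsElt hq2 hq0 hq_up hq_lo hηdef hM0 hM hM2 hκ2 hstep

/-- (Lemma `tail2` of the paper.)  For `0 < ε < 1/2` and `0 < M < 4`, with
`Δ = 10√ε/(4-M)`, there is `S₀ < ∞` depending only on `ε` and `M` such that: whenever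
`‖lam‖_{1/2} ≤ 4 + 2ε` on `[0,T']` with `T' ≥ T > 0` and `x ≠ lam 0` is captured by `lam` at
time `T`, then for every `s ≥ S₀` the interval `[(1-e^{-s})T, (1-e^{-(s+Δ)})T]` contains a
time `t` with `|lam T - lam t| ≥ M √(T-t)`; and if moreover `x > lam 0`, the same `t`
satisfies `lam T - lam t ≥ M √(T-t)`. -/
theorem capture_forces_large_oscillation
    (ε M : ℝ) (hε0 : 0 < ε) (hε : ε < 1 / 2) (hM0 : 0 < M) (hM : M < 4) :
    ∃ S₀ : ℝ, ∀ T : ℝ, 0 < T → ∀ T' : ℝ, T ≤ T' → ∀ lam : ℝ → ℝ,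
      HalfLipOn lam (Set.Icc 0 T') (4 + 2 * ε) →
      ∀ x : ℝ, x ≠ lam 0 → ∀ g : ℝ → ℝ, RealLoewnerSolOn lam x g T →
      Tendsto (fun t => g t - lam t) (nhdsWithin T (Set.Iio T)) (nhds 0) →
      ∀ s : ℝ, S₀ ≤ s →
        ∃ t ∈ Set.Icc ((1 - Real.exp (-s)) * T)
            ((1 - Real.exp (-(s + 10 * Real.sqrt ε / (4 - M)))) * T),
          M * Real.sqrt (T - t) ≤ |lam T - lam t| ∧
          (lam 0 < x → M * Real.sqrt (T - t) ≤ lam T - lam t) := by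
  obtain ⟨S₀, hS₀⟩ := main_pos ε M hε0 hε hM0 hM
  refine ⟨S₀, ?_⟩
  intro T hT T' hTT' lam hlip x hx g hg hcap s hs
  rcases hx.lt_or_gt with hxlt | hxgt
  · -- x < lam 0 : reflect
    have hlip' : HalfLipOn (fun t => -lam t) (Set.Icc 0 T') (4 + 2 * ε) := by
      intro s₁ hs₁ t₁ ht₁
      have := hlip s₁ hs₁ t₁ ht₁
      calc |(-lam t₁) - (-lam s₁)| = |lam t₁ - lam s₁| := by
            rw [show (-lam t₁) - (-lam s₁) = -(lam t₁ - lam s₁) by ring, abs_neg]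
        _ ≤ (4 + 2*ε) * Real.sqrt |t₁ - s₁| := this
    have hg' : RealLoewnerSolOn (fun t => -lam t) (-x) (fun t => -g t) T := by
      constructor
      · simp [hg.1]
      · intro t ht
        refine ⟨by simpa using (hg.2 t ht).1, ?_⟩
        have hd := ((hg.2 t ht).2).neg
        have : -(2 / (g t - lam t)) = 2 / (-g t - -lam t) := by
          rw [show -g t - -lam t = -(g t - lam t) by ring, div_neg]
        rwa [this] at hd
    have hcap' : Tendsto (fun t => (-g t) - (-lam t)) (nhdsWithin T (Set.Iio T)) (nhds 0) := by
      have := hcap.neg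
      simp only [neg_zero] at this
      convert this using 2 with t
      ring
    obtain ⟨t, htmem, hineq⟩ := hS₀ T hT T' hTT' (fun t => -lam t) hlip' (-x)
      (by simpa using hxlt) (fun t => -g t) hg' hcap' s hs
    refine ⟨t, htmem, ?_, ?_⟩
    · calc M * Real.sqrt (T - t) ≤ (-lam T) - (-lam t) := hineq
        _ = -(lam T - lam t) := by ring
        _ ≤ |lam T - lam t| := neg_le_abs _
    · intro h
      exact absurd h (not_lt.2 hxlt.le)
  · -- lam 0 < x
    obtain ⟨t, htmem, hineq⟩ := hS₀ T hT T' hTT' lam hlip x hxgt g hg hcap s hs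
    exact ⟨t, htmem, le_trans hineq (le_abs_self _), fun _ => hineq⟩
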